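/- Let $r \geq 1$ and let $A$ be a real symmetric positive definite $r \times r$ matrix. Then the system of equations $\prod_{j=1}^r x_j^{A_{ij}} = 1 - x_i$ for $i = 1, \ldots, r$ has exactly one solution $x = (x_1, \ldots, x_r)$ with all $x_i \in (0,1)$. -/

import Mathlib

open Real Set Finset Matrix Topology Filter

variable {r : ℕ}

noncomputable def zh (s : ℝ) : ℝ := Real.log (1 - Real.exp s)

noncomputable def zg (t : ℝ) : ℝ := ∫ s in (-1:ℝ)..t, zh s

lemma one_sub_exp_pos {s : ℝ} (hs : s < 0) : 0 < 1 - Real.exp s := by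
  have := Real.exp_lt_one_iff.mpr hs; linarith

lemma zh_neg {s : ℝ} (hs : s < 0) : zh s < 0 := by
  have h1 := one_sub_exp_pos hs
  have h2 : (1:ℝ) - Real.exp s < 1 := by have := Real.exp_pos s; linarith
  exact Real.log_neg h1 h2

lemma zh_anti {a b : ℝ} (hab : a ≤ b) (hb : b < 0) : zh b ≤ zh a := by
  unfold zh
  have := one_sub_exp_pos hb
  exact Real.log_le_log (by linarith) (by have := Real.exp_le_exp.mpr hab; linarith)

lemma zh_continuousAt {s : ℝ} (hs : s < 0) : ContinuousAt zh s := by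
  have h1 := one_sub_exp_pos hs
  exact (Real.continuousAt_log (by linarith)).comp (by fun_prop)

lemma zh_intervalIntegrable {a b : ℝ} (ha : a < 0) (hb : b < 0) :
    IntervalIntegrable zh MeasureTheory.volume a b := by
  apply ContinuousOn.intervalIntegrable
  intro s hs
  rw [Set.uIcc_eq_union] at hs
  have : s < 0 := by
    rcases hs with h | h
    · exact lt_of_le_of_lt h.2 hb
    · exact lt_of_le_of_lt h.2 ha
  exact (zh_continuousAt this).continuousWithinAt

lemma zg_hasDerivAt {t : ℝ} (ht : t < 0) : HasDerivAt zg (zh t) t := by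
  apply intervalIntegral.integral_hasDerivAt_right (zh_intervalIntegrable (by norm_num) ht)
  · exact ContinuousAt.stronglyMeasurableAtFilter isOpen_Iio (fun x hx => zh_continuousAt hx) t ht
  · exact zh_continuousAt ht

lemma zg_neg_one : zg (-1) = 0 := intervalIntegral.integral_same

lemma neg_zh_le_exp {s : ℝ} (hs : s ≤ -1) : -zh s ≤ 2 * Real.exp s := by
  have hs0 : s < 0 := lt_of_le_of_lt hs (by norm_num)
  have hy := one_sub_exp_pos hs0
  have hhalf : Real.exp s ≤ 1/2 := by
    have h1 : Real.exp s ≤ Real.exp (-1) := Real.exp_le_exp.mpr hs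
    have h2 : Real.exp (-1) ≤ 1/2 := by
      rw [Real.exp_neg]
      have h3 : (2:ℝ) ≤ Real.exp 1 := by
        have := Real.add_one_le_exp 1; linarith
      rw [inv_le_comm₀ (Real.exp_pos 1) ] <;> norm_num
      linarith
    linarith
  have hlog : Real.log ((1 - Real.exp s)⁻¹) ≤ (1 - Real.exp s)⁻¹ - 1 :=
    Real.log_le_sub_one_of_pos (by positivity)
  rw [Real.log_inv] at hlog
  have hzh : -zh s ≤ (1 - Real.exp s)⁻¹ - 1 := by unfold zh; linarith
  have hineq : (1 - Real.exp s)⁻¹ - 1 ≤ 2 * Real.exp s := by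
    rw [inv_eq_one_div, div_sub' (ne_of_gt hy)]
    rw [div_le_iff₀ hy]
    nlinarith [Real.exp_pos s]
  linarith

lemma zg_le {t : ℝ} (ht : t < 0) : zg t ≤ 1 := by
  rcases le_or_gt (-1) t with h | h
  · have hnn : (0:ℝ) ≤ ∫ s in (-1:ℝ)..t, -zh s :=
      intervalIntegral.integral_nonneg h (fun x hx => by
        have := zh_neg (lt_of_le_of_lt hx.2 ht); linarith)
    rw [intervalIntegral.integral_neg] at hnn
    unfold zg; linarith
  · have hti : t ≤ -1 := le_of_lt h
    have h1 : zg t = -∫ s in t..(-1:ℝ), zh s := by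
      rw [zg]; exact intervalIntegral.integral_symm _ _
    have hint1 : IntervalIntegrable (fun s => -zh s) MeasureTheory.volume t (-1) :=
      (zh_intervalIntegrable ht (by norm_num)).neg
    have hint2 : IntervalIntegrable (fun s => 2 * Real.exp s) MeasureTheory.volume t (-1) :=
      (continuous_const.mul Real.continuous_exp).intervalIntegrable _ _
    have hmono : (∫ s in t..(-1:ℝ), -zh s) ≤ ∫ s in t..(-1:ℝ), 2 * Real.exp s := by
      apply intervalIntegral.integral_mono_on hti hint1 hint2
      intro x hx
      exact neg_zh_le_exp hx.2
    have hc : (∫ s in t..(-1:ℝ), 2 * Real.exp s) = 2 * (Real.exp (-1) - Real.exp t) := by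
      rw [intervalIntegral.integral_const_mul, integral_exp]
    have hval : (∫ s in t..(-1:ℝ), -zh s) = -∫ s in t..(-1:ℝ), zh s :=
      intervalIntegral.integral_neg
    have hexp1 : Real.exp (-1) ≤ 1/2 := by
      rw [Real.exp_neg]
      have h3 : (2:ℝ) ≤ Real.exp 1 := by have := Real.add_one_le_exp 1; linarith
      rw [inv_le_comm₀ (Real.exp_pos 1)] <;> norm_num
      linarith
    have hexpt : 0 < Real.exp t := Real.exp_pos t
    rw [h1]
    rw [hc, hval] at hmono
    linarith

noncomputable def zQ (A : Matrix (Fin r) (Fin r) ℝ) (t : Fin r → ℝ) : ℝ :=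
  ∑ i, ∑ j, A i j * t i * t j

lemma zQ_eq_dot (A : Matrix (Fin r) (Fin r) ℝ) (t : Fin r → ℝ) :
    zQ A t = t ⬝ᵥ A.mulVec t := by
  unfold zQ
  simp only [dotProduct, Matrix.mulVec, Finset.mul_sum]
  apply Finset.sum_congr rfl
  intro i _
  apply Finset.sum_congr rfl
  intro j _
  ring

lemma zQ_pos (A : Matrix (Fin r) (Fin r) ℝ) (hA : A.PosDef) {t : Fin r → ℝ} (ht : t ≠ 0) :
    0 < zQ A t := by
  rw [zQ_eq_dot]
  have := hA.dotProduct_mulVec_pos ht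
  simpa using this

lemma zQ_nonneg (A : Matrix (Fin r) (Fin r) ℝ) (hA : A.PosDef) (t : Fin r → ℝ) :
    0 ≤ zQ A t := by
  rcases eq_or_ne t 0 with rfl | ht
  · simp [zQ]
  · exact le_of_lt (zQ_pos A hA ht)

lemma zQ_smul (A : Matrix (Fin r) (Fin r) ℝ) (c : ℝ) (t : Fin r → ℝ) :
    zQ A (c • t) = c^2 * zQ A t := by
  unfold zQ
  rw [Finset.mul_sum]
  apply Finset.sum_congr rfl
  intro i _
  rw [Finset.mul_sum]
  apply Finset.sum_congr rfl
  intro j _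
  simp only [Pi.smul_apply, smul_eq_mul]
  ring

lemma zQ_continuous (A : Matrix (Fin r) (Fin r) ℝ) : Continuous (zQ A) := by
  unfold zQ
  fun_prop

lemma zQ_lower (hr : 1 ≤ r) (A : Matrix (Fin r) (Fin r) ℝ) (hA : A.PosDef) :
    ∃ lam : ℝ, 0 < lam ∧ ∀ t : Fin r → ℝ, lam * ‖t‖^2 ≤ zQ A t := by
  have hne : (Metric.sphere (0 : Fin r → ℝ) 1).Nonempty := by
    refine ⟨(fun _ => 1 : Fin r → ℝ), ?_⟩
    simp only [Metric.mem_sphere, dist_zero_right]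
    have : Nonempty (Fin r) := ⟨⟨0, hr⟩⟩
    simp [pi_norm_const]
  obtain ⟨u, hu, hmin⟩ := (isCompact_sphere (0 : Fin r → ℝ) 1).exists_isMinOn hne
    (zQ_continuous A).continuousOn
  have hu1 : ‖u‖ = 1 := by simpa using hu
  have hune : u ≠ 0 := by intro h; rw [h] at hu1; simp at hu1
  refine ⟨zQ A u, zQ_pos A hA hune, ?_⟩
  intro t
  rcases eq_or_ne t 0 with rfl | ht
  · simp [zQ]
  · have hnt : (0:ℝ) < ‖t‖ := norm_pos_iff.mpr ht
    set v : Fin r → ℝ := ‖t‖⁻¹ • t with hv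
    have hvs : v ∈ Metric.sphere (0 : Fin r → ℝ) 1 := by
      simp only [Metric.mem_sphere, dist_zero_right, hv, norm_smul, norm_inv, norm_norm]
      field_simp
    have h1 : zQ A u ≤ zQ A v := hmin hvs
    have h2 : zQ A v = (‖t‖⁻¹)^2 * zQ A t := zQ_smul A _ t
    have h3 : zQ A u * ‖t‖^2 ≤ zQ A t := by
      rw [h2] at h1
      have := mul_le_mul_of_nonneg_right h1 (le_of_lt (pow_pos hnt 2))
      calc zQ A u * ‖t‖^2 ≤ (‖t‖⁻¹)^2 * zQ A t * ‖t‖^2 := this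
        _ = zQ A t := by field_simp
    linarith

noncomputable def zG (A : Matrix (Fin r) (Fin r) ℝ) (t : Fin r → ℝ) : ℝ :=
  (1/2) * zQ A t - ∑ i, zg (t i)

lemma zG_update (A : Matrix (Fin r) (Fin r) ℝ) (t : Fin r → ℝ) (i : Fin r) (s : ℝ) :
    zG A (Function.update t i s) =
      (1/2) * (A i i * s^2 + (∑ j ∈ Finset.univ.erase i, (A i j + A j i) * t j) * s
        + ∑ j ∈ Finset.univ.erase i, ∑ k ∈ Finset.univ.erase i, A j k * t j * t k)
      - (zg s + ∑ j ∈ Finset.univ.erase i, zg (t j)) := by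
  have hup : ∀ j ∈ Finset.univ.erase i, Function.update t i s j = t j := fun j hj =>
    Function.update_of_ne (Finset.mem_erase.mp hj).1 _ _
  unfold zG zQ
  have e1 : ∑ j, ∑ k, A j k * Function.update t i s j * Function.update t i s k
      = (A i i * s * s + ∑ k ∈ Finset.univ.erase i, A i k * s * t k)
        + ∑ j ∈ Finset.univ.erase i,
            (A j i * t j * s + ∑ k ∈ Finset.univ.erase i, A j k * t j * t k) := by
    rw [← Finset.add_sum_erase _ _ (Finset.mem_univ i)]
    congr 1
    · rw [← Finset.add_sum_erase _ _ (Finset.mem_univ i)]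
      congr 1
      · rw [Function.update_self]
      · exact Finset.sum_congr rfl fun k hk => by rw [Function.update_self, hup k hk]
    · apply Finset.sum_congr rfl
      intro j hj
      rw [← Finset.add_sum_erase _ _ (Finset.mem_univ i)]
      congr 1
      · rw [hup j hj, Function.update_self]
      · exact Finset.sum_congr rfl fun k hk => by rw [hup j hj, hup k hk]
  have e2 : ∑ j, zg (Function.update t i s j)
      = zg s + ∑ j ∈ Finset.univ.erase i, zg (t j) := by
    rw [← Finset.add_sum_erase _ _ (Finset.mem_univ i), Function.update_self]
    congr 1
    exact Finset.sum_congr rfl fun j hj => by rw [hup j hj]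
  have e3 : (∑ j ∈ Finset.univ.erase i, (A i j + A j i) * t j) * s
      = (∑ j ∈ Finset.univ.erase i, A i j * s * t j)
        + ∑ j ∈ Finset.univ.erase i, A j i * t j * s := by
    rw [Finset.sum_mul, ← Finset.sum_add_distrib]
    exact Finset.sum_congr rfl fun j _ => by ring
  have e4 : ∑ j ∈ Finset.univ.erase i,
        (A j i * t j * s + ∑ k ∈ Finset.univ.erase i, A j k * t j * t k)
      = (∑ j ∈ Finset.univ.erase i, A j i * t j * s)
        + ∑ j ∈ Finset.univ.erase i, ∑ k ∈ Finset.univ.erase i, A j k * t j * t k :=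
    Finset.sum_add_distrib
  rw [e1, e2, e3, e4]
  ring

lemma zG_hasDerivAt (A : Matrix (Fin r) (Fin r) ℝ) (hAsymm : A.IsSymm)
    (t : Fin r → ℝ) (i : Fin r) {s0 : ℝ} (hs0 : s0 < 0) :
    HasDerivAt (fun s => zG A (Function.update t i s))
      ((A.mulVec (Function.update t i s0)) i - zh s0) s0 := by
  have hfun : (fun s => zG A (Function.update t i s))
      = fun s => (1/2) * (A i i * s^2 + (∑ j ∈ Finset.univ.erase i, (A i j + A j i) * t j) * s
          + ∑ j ∈ Finset.univ.erase i, ∑ k ∈ Finset.univ.erase i, A j k * t j * t k)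
        - (zg s + ∑ j ∈ Finset.univ.erase i, zg (t j)) :=
    funext (zG_update A t i)
  rw [hfun]
  set b := ∑ j ∈ Finset.univ.erase i, (A i j + A j i) * t j with hb
  set c := ∑ j ∈ Finset.univ.erase i, ∑ k ∈ Finset.univ.erase i, A j k * t j * t k
  set d := ∑ j ∈ Finset.univ.erase i, zg (t j)
  have h1 : HasDerivAt (fun s : ℝ => (1/2) * (A i i * s^2 + b * s + c))
      ((1/2) * (A i i * (2*s0) + b)) s0 := by
    have hp : HasDerivAt (fun s : ℝ => A i i * s^2 + b * s + c)
        (A i i * (2*s0) + b) s0 := by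
      have := (((hasDerivAt_pow 2 s0).const_mul (A i i)).add
        ((hasDerivAt_id s0).const_mul b)).add_const c
      convert this using 1 <;> try rfl
      simp
    exact hp.const_mul (1/2)
  have h2 : HasDerivAt (fun s : ℝ => zg s + d) (zh s0) s0 := (zg_hasDerivAt hs0).add_const d
  have := h1.sub h2
  convert this using 1 <;> try rfl
  have hmv : (A.mulVec (Function.update t i s0)) i
      = A i i * s0 + ∑ j ∈ Finset.univ.erase i, A i j * t j := by
    unfold Matrix.mulVec dotProduct
    rw [← Finset.add_sum_erase _ _ (Finset.mem_univ i), Function.update_self]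
    congr 1
    exact Finset.sum_congr rfl fun j hj => by
      rw [Function.update_of_ne (Finset.mem_erase.mp hj).1]
  have hbb : b = 2 * ∑ j ∈ Finset.univ.erase i, A i j * t j := by
    rw [hb, Finset.mul_sum]
    exact Finset.sum_congr rfl fun j _ => by rw [hAsymm.apply i j]; ring
  rw [hmv, hbb]
  ring

lemma exists_lt_of_hasDerivAt_pos {f : ℝ → ℝ} {x D : ℝ} (hf : HasDerivAt f D x) (hD : 0 < D)
    {a : ℝ} (ha : a < x) : ∃ s, a < s ∧ s < x ∧ f s < f x := by
  have h := hasDerivAt_iff_tendsto_slope.mp hf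
  have hl : 𝓝[<] x ≤ 𝓝[≠] x := nhdsWithin_mono _ (fun s hs => ne_of_lt hs)
  have h2 : ∀ᶠ s in 𝓝[<] x, 0 < slope f x s :=
    (h.mono_left hl).eventually_const_lt hD
  have h3 : ∀ᶠ s in 𝓝[<] x, a < s ∧ s < x :=
    Filter.eventually_of_mem (Ioo_mem_nhdsLT ha) (fun s hs => ⟨hs.1, hs.2⟩)
  obtain ⟨s, hs1, hs2, hs3⟩ := (h2.and h3).exists
  refine ⟨s, hs2, hs3, ?_⟩
  rw [slope_def_field] at hs1
  have hsx : s - x < 0 := by linarith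
  by_contra hcon
  push_neg at hcon
  have : (f s - f x) / (s - x) ≤ 0 := div_nonpos_of_nonneg_of_nonpos (by linarith) (le_of_lt hsx)
  linarith

lemma zG_lower (A : Matrix (Fin r) (Fin r) ℝ) {lam : ℝ}
    (hlow : ∀ t : Fin r → ℝ, lam * ‖t‖^2 ≤ zQ A t)
    {t : Fin r → ℝ} (ht : ∀ i, t i < 0) :
    (1/2) * (lam * ‖t‖^2) - r ≤ zG A t := by
  have h1 : ∑ i, zg (t i) ≤ ∑ _i : Fin r, (1:ℝ) :=
    Finset.sum_le_sum (fun i _ => zg_le (ht i))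
  have h2 : ∑ _i : Fin r, (1:ℝ) = r := by simp
  have h3 := hlow t
  unfold zG
  have := mul_le_mul_of_nonneg_left h3 (by norm_num : (0:ℝ) ≤ 1/2)
  linarith

set_option maxHeartbeats 1600000 in
lemma zsol_exists (hr : 1 ≤ r) (A : Matrix (Fin r) (Fin r) ℝ) (hA : A.PosDef)
    (hAsymm : A.IsSymm) :
    ∃ t : Fin r → ℝ, (∀ i, t i < 0) ∧ ∀ i, (A.mulVec t) i = zh (t i) := by
  obtain ⟨lam, hlam, hlow⟩ := zQ_lower hr A hA
  set S : ℝ := ∑ i, ∑ j, |A i j| with hS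
  have hS0 : 0 ≤ S := Finset.sum_nonneg fun i _ => Finset.sum_nonneg fun j _ => abs_nonneg _
  set t0 : Fin r → ℝ := fun _ => -1 with ht0
  have hGt0 : zG A t0 ≤ (1/2) * S := by
    unfold zG
    have hq : zQ A t0 ≤ S := by
      unfold zQ
      apply Finset.sum_le_sum; intro i _
      apply Finset.sum_le_sum; intro j _
      simp only [ht0]
      calc A i j * -1 * -1 = A i j := by ring
        _ ≤ |A i j| := le_abs_self _
    have : ∑ i, zg (t0 i) = 0 := by simp [ht0, zg_neg_one]
    rw [this]; linarith
  -- choose M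
  set M : ℝ := max 2 (Real.sqrt ((S + 2*r + 2)/lam)) with hM
  have hM2 : (2:ℝ) ≤ M := le_max_left _ _
  have hM0 : (0:ℝ) < M := by linarith
  have hMsq : S + 2*r + 2 ≤ lam * M^2 := by
    have harg : 0 ≤ (S + 2*r + 2)/lam := by positivity
    have h1 : Real.sqrt ((S + 2*r + 2)/lam) ≤ M := le_max_right _ _
    have h2 : (S + 2*r + 2)/lam ≤ M^2 := by
      have := Real.sq_sqrt harg
      nlinarith [Real.sqrt_nonneg ((S + 2*r + 2)/lam)]
    calc S + 2*r + 2 = ((S + 2*r + 2)/lam) * lam := by field_simp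
      _ ≤ M^2 * lam := mul_le_mul_of_nonneg_right h2 (le_of_lt hlam)
      _ = lam * M^2 := by ring
  -- choose ε
  set C : ℝ := M * S + 1 with hC
  have hC0 : (0:ℝ) < C := by nlinarith
  have hexpC : Real.exp (-C) < 1 := by
    rw [Real.exp_lt_one_iff]; linarith
  have hexpC0 : 0 < 1 - Real.exp (-C) := by linarith
  set δ : ℝ := -Real.log (1 - Real.exp (-C)) with hδ
  have hδ0 : 0 < δ := by
    have : Real.log (1 - Real.exp (-C)) < 0 :=
      Real.log_neg hexpC0 (by have := Real.exp_pos (-C); linarith)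
    linarith
  set ε : ℝ := min (1/2) δ with hε
  have hε0 : 0 < ε := lt_min (by norm_num) hδ0
  have hε12 : ε ≤ 1/2 := min_le_left _ _
  have hεδ : ε ≤ δ := min_le_right _ _
  have hεM : ε < M := by linarith
  have hzhε : zh (-ε) ≤ -C := by
    have h1 : zh (-ε) ≤ zh (-δ) := zh_anti (by linarith) (by linarith)
    have h2 : zh (-δ) = -C := by
      unfold zh
      rw [hδ, neg_neg, Real.exp_log hexpC0, sub_sub_cancel, Real.log_exp]
    linarith
  -- compact box
  set lo : Fin r → ℝ := fun _ => -M with hlo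
  set hi : Fin r → ℝ := fun _ => -ε with hhi
  have hK : IsCompact (Set.Icc lo hi) := isCompact_Icc
  have ht0K : t0 ∈ Set.Icc lo hi := by
    constructor <;> (intro i; simp only [ht0, hlo, hhi]) <;> linarith
  have hGcont : ContinuousOn (zG A) (Set.Icc lo hi) := by
    intro t htK
    have htneg : ∀ i, t i < 0 := fun i => lt_of_le_of_lt (htK.2 i) (by simp [hhi]; linarith)
    apply ContinuousAt.continuousWithinAt
    unfold zG
    apply ContinuousAt.sub
    · exact (continuous_const.mul (zQ_continuous A)).continuousAt
    · apply tendsto_finset_sum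
      intro i _
      exact ContinuousAt.comp (x := t) (g := zg) (f := fun u : Fin r → ℝ => u i)
        ((zg_hasDerivAt (htneg i)).continuousAt) (continuous_apply i).continuousAt
  obtain ⟨ts, htsK, hmin⟩ := hK.exists_isMinOn ⟨t0, ht0K⟩ hGcont
  have htsneg : ∀ i, ts i < 0 := fun i => lt_of_le_of_lt (htsK.2 i) (by simp [hhi]; linarith)
  have htsM : ∀ i, -M ≤ ts i := fun i => by simpa [hlo] using htsK.1 i
  have htsε : ∀ i, ts i ≤ -ε := fun i => by simpa [hhi] using htsK.2 i
  have hGts : zG A ts ≤ (1/2) * S := le_trans (hmin ht0K) hGt0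
  -- strict lower bound on coordinates
  have hts_lt : ∀ i, -M < ts i := by
    intro i
    by_contra hcon
    push_neg at hcon
    have hi1 : ts i ≤ -M := hcon
    have hnorm : M ≤ ‖ts‖ := by
      have := norm_le_pi_norm ts i
      have habs : M ≤ |ts i| := by
        rw [abs_of_nonpos (by linarith)]; linarith
      calc M ≤ |ts i| := habs
        _ ≤ ‖ts‖ := by simpa using norm_le_pi_norm ts i
    have hlower := zG_lower A hlow htsneg
    have hM2' : lam * M^2 ≤ lam * ‖ts‖^2 := by
      apply mul_le_mul_of_nonneg_left _ (le_of_lt hlam)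
      nlinarith [norm_nonneg ts]
    nlinarith
  -- rule out upper boundary via derivative
  have hts_ub : ∀ i, ts i < -ε := by
    intro i
    rcases lt_or_eq_of_le (htsε i) with h | h
    · exact h
    · exfalso
      have hderiv := zG_hasDerivAt A hAsymm ts i (s0 := ts i) (htsneg i)
      rw [Function.update_eq_self] at hderiv
      have hAmv : -(M*S) ≤ (A.mulVec ts) i := by
        have habs : |(A.mulVec ts) i| ≤ M * S := by
          have h1 : |(A.mulVec ts) i| ≤ ∑ j, |A i j * ts j| := by
            simpa [Matrix.mulVec, dotProduct] using
              Finset.abs_sum_le_sum_abs (fun j => A i j * ts j) Finset.univ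
          have h2 : ∑ j, |A i j * ts j| ≤ ∑ j, |A i j| * M := by
            apply Finset.sum_le_sum; intro j _
            rw [abs_mul]
            apply mul_le_mul_of_nonneg_left _ (abs_nonneg _)
            rw [abs_le]; exact ⟨htsM j, by have := htsneg j; linarith⟩
          have h3 : ∑ j, |A i j| * M ≤ S * M := by
            rw [← Finset.sum_mul]
            apply mul_le_mul_of_nonneg_right _ (le_of_lt hM0)
            exact Finset.single_le_sum (f := fun i => ∑ j, |A i j|)
              (fun i _ => Finset.sum_nonneg fun j _ => abs_nonneg _) (Finset.mem_univ i)
          calc |(A.mulVec ts) i| ≤ ∑ j, |A i j * ts j| := h1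
            _ ≤ ∑ j, |A i j| * M := h2
            _ ≤ S * M := h3
            _ = M * S := by ring
        have := abs_le.mp habs
        linarith [this.1]
      have hDpos : 0 < (A.mulVec ts) i - zh (ts i) := by
        rw [h]
        have := hzhε
        rw [hC] at this
        linarith
      obtain ⟨s, hs1, hs2, hs3⟩ := exists_lt_of_hasDerivAt_pos hderiv hDpos
        (a := -M) (by rw [h] at *; linarith [hts_lt i])
      -- update ts i s ∈ box
      have hmem : Function.update ts i s ∈ Set.Icc lo hi := by
        constructor <;> intro j
        · simp only [hlo]
          rcases eq_or_ne j i with rfl | hne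
          · rw [Function.update_self]; linarith
          · rw [Function.update_of_ne hne]; exact htsM j
        · simp only [hhi]
          rcases eq_or_ne j i with rfl | hne
          · rw [Function.update_self]; rw [h] at hs2; linarith
          · rw [Function.update_of_ne hne]; exact htsε j
      have hcontr : zG A ts ≤ zG A (Function.update ts i s) := hmin hmem
      rw [Function.update_eq_self] at hs3
      linarith
  -- interior minimum gives zero derivative
  refine ⟨ts, htsneg, ?_⟩
  intro i
  have hloc : IsLocalMin (fun s => zG A (Function.update ts i s)) (ts i) := by
    apply IsMinOn.isLocalMin (s := Set.Icc (-M) (-ε))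
    · intro s hs
      have hmem : Function.update ts i s ∈ Set.Icc lo hi := by
        constructor <;> intro j
        · simp only [hlo]
          rcases eq_or_ne j i with rfl | hne
          · rw [Function.update_self]; exact hs.1
          · rw [Function.update_of_ne hne]; exact htsM j
        · simp only [hhi]
          rcases eq_or_ne j i with rfl | hne
          · rw [Function.update_self]; exact hs.2
          · rw [Function.update_of_ne hne]; exact htsε j
      have h1 := hmin hmem
      simpa [Function.update_eq_self] using h1
    · exact Icc_mem_nhds (hts_lt i) (hts_ub i)
  have hzero := hloc.hasDerivAt_eq_zero (zG_hasDerivAt A hAsymm ts i (htsneg i))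
  rw [Function.update_eq_self] at hzero
  linarith

lemma zsol_unique (A : Matrix (Fin r) (Fin r) ℝ) (hA : A.PosDef)
    {t t' : Fin r → ℝ} (ht : ∀ i, t i < 0) (ht' : ∀ i, t' i < 0)
    (he : ∀ i, (A.mulVec t) i = zh (t i)) (he' : ∀ i, (A.mulVec t') i = zh (t' i)) :
    t = t' := by
  by_contra hne
  have hv : t - t' ≠ 0 := sub_ne_zero.mpr hne
  have hq := zQ_pos A hA hv
  have heq : zQ A (t - t') = ∑ i, (t i - t' i) * (zh (t i) - zh (t' i)) := by
    rw [zQ_eq_dot, Matrix.mulVec_sub]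
    unfold dotProduct
    apply Finset.sum_congr rfl
    intro i _
    simp only [Pi.sub_apply]
    rw [← he i, ← he' i]
  have hle : zQ A (t - t') ≤ 0 := by
    rw [heq]
    apply Finset.sum_nonpos
    intro i _
    rcases le_total (t i) (t' i) with h | h
    · have h1 : zh (t' i) ≤ zh (t i) := zh_anti h (ht' i)
      have h2 : t i - t' i ≤ 0 := by linarith
      nlinarith
    · have h1 : zh (t i) ≤ zh (t' i) := zh_anti h (ht i)
      have h2 : 0 ≤ t i - t' i := by linarith
      nlinarith
  linarith

theorem zagier_unique_solution (r : ℕ) (hr : 1 ≤ r)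
    (A : Matrix (Fin r) (Fin r) ℝ) (hA : A.PosDef) (hAsymm : A.IsSymm) :
    ∃! x : Fin r → ℝ, (∀ i, x i ∈ Set.Ioo (0 : ℝ) 1) ∧
      ∀ i, ∏ j, (x j) ^ (A i j) = 1 - x i := by
  obtain ⟨ts, hneg, heq⟩ := zsol_exists hr A hA hAsymm
  refine ⟨fun i => Real.exp (ts i), ⟨?_, ?_⟩, ?_⟩
  · intro i
    exact ⟨Real.exp_pos _, Real.exp_lt_one_iff.mpr (hneg i)⟩
  · intro i
    have hprod : ∏ j, Real.exp (ts j) ^ A i j = Real.exp (∑ j, A i j * ts j) := by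
      rw [Real.exp_sum]
      apply Finset.prod_congr rfl
      intro j _
      rw [Real.rpow_def_of_pos (Real.exp_pos _), Real.log_exp]
      ring_nf
    have hmv : ∑ j, A i j * ts j = (A.mulVec ts) i := by
      simp [Matrix.mulVec, dotProduct]
    rw [hprod, hmv, heq i]
    unfold zh
    rw [Real.exp_log (one_sub_exp_pos (hneg i))]
  · rintro y ⟨hy1, hy2⟩
    have hu_neg : ∀ i, Real.log (y i) < 0 := fun i => Real.log_neg (hy1 i).1 (hy1 i).2
    have hexp : ∀ i, Real.exp (Real.log (y i)) = y i := fun i => Real.exp_log (hy1 i).1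
    have hueq : ∀ i, (A.mulVec (fun j => Real.log (y j))) i = zh (Real.log (y i)) := by
      intro i
      have hlog : Real.log (∏ j, y j ^ A i j) = ∑ j, A i j * Real.log (y j) := by
        rw [Real.log_prod (fun j _ => ne_of_gt (Real.rpow_pos_of_pos (hy1 j).1 _))]
        apply Finset.sum_congr rfl
        intro j _
        rw [Real.log_rpow (hy1 j).1]
      have hmv : (A.mulVec (fun j => Real.log (y j))) i = ∑ j, A i j * Real.log (y j) := by
        simp [Matrix.mulVec, dotProduct]
      rw [hmv, ← hlog, hy2 i]
      unfold zh
      rw [hexp i]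
    have huts : (fun j => Real.log (y j)) = ts := zsol_unique A hA hu_neg hneg hueq heq
    funext i
    have : Real.log (y i) = ts i := congrFun huts i
    rw [← hexp i, this]
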